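/- For every ε ∈ ℝ and every real symmetric n×n matrix W, one has ‖Φ(ε,W) − Π(W)‖_F ≤ (√n/2)·|ε|; in particular Φ(ε,W) → Π(W) as ε → 0, uniformly in W. -/

import Mathlib

/-- The Huber smoothing function `h(ε,t)`. -/
noncomputable def huber (ε t : ℝ) : ℝ :=
  if ε = 0 then max 0 t
  else if |ε| < t then t - |ε| / 2
  else if 0 ≤ t then t ^ 2 / (2 * |ε|)
  else 0

/-- The smoothed projection `Φ(ε,W) = h(ε,·)[W]` via the primary matrix function. -/
noncomputable def Phi {n : ℕ} (ε : ℝ) {W : Matrix (Fin n) (Fin n) ℝ}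
    (hW : W.IsHermitian) : Matrix (Fin n) (Fin n) ℝ :=
  hW.cfc (huber ε)

/-- The projection onto the PSD cone, `Π(W) = (t ↦ max(t,0))[W]`. -/
noncomputable def PiPSD {n : ℕ} {W : Matrix (Fin n) (Fin n) ℝ}
    (hW : W.IsHermitian) : Matrix (Fin n) (Fin n) ℝ :=
  hW.cfc (fun t => max t 0)

/-- The Frobenius norm of a real matrix. -/
noncomputable def frobNorm {n : ℕ} (M : Matrix (Fin n) (Fin n) ℝ) : ℝ :=
  Real.sqrt (∑ i, ∑ j, (M i j) ^ 2)

/-- Pointwise bound: `|h(ε,t) − max(t,0)| ≤ |ε|/2`. -/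
lemma huber_sub_max_abs (ε t : ℝ) : |huber ε t - max t 0| ≤ |ε| / 2 := by
  unfold huber
  rcases eq_or_ne ε 0 with h | h
  · simp [h, max_comm]
  · have hε : 0 < |ε| := abs_pos.mpr h
    by_cases h1 : |ε| < t
    · rw [if_neg h, if_pos h1, max_eq_left (le_of_lt (lt_of_le_of_lt hε.le h1))]
      rw [abs_of_nonpos (by ring_nf; linarith)]
      linarith
    · push_neg at h1
      by_cases h2 : 0 ≤ t
      · rw [if_neg h, if_neg (not_lt.mpr h1), if_pos h2, max_eq_left h2]
        rw [abs_of_nonpos]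
        · rw [neg_sub, sub_le_iff_le_add, ← sub_le_iff_le_add', le_div_iff₀ (by linarith)]
          nlinarith [sq_nonneg (t - |ε|)]
        · rw [sub_nonpos, div_le_iff₀ (by linarith)]
          nlinarith
      · push_neg at h2
        rw [if_neg h, if_neg (not_lt.mpr h1), if_neg (not_le.mpr h2), max_eq_right h2.le]
        simp [hε.le]
        linarith

/-- Sum of squared entries of `U D U*` with `U` unitary equals `∑ dᵢ²`. -/
lemma key {n : ℕ} (U : Matrix.unitaryGroup (Fin n) ℝ) (d : Fin n → ℝ) :
    ∑ i, ∑ j, (((U : Matrix (Fin n) (Fin n) ℝ) * Matrix.diagonal d *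
      star (U : Matrix (Fin n) (Fin n) ℝ)) i j) ^ 2 = ∑ i, d i ^ 2 := by
  set V := (U : Matrix (Fin n) (Fin n) ℝ) with hV
  set M := V * Matrix.diagonal d * star V with hM
  have hD : star (Matrix.diagonal d) = Matrix.diagonal d := by
    simp [Matrix.star_eq_conjTranspose, Matrix.diagonal_conjTranspose]
  have hsym : star M = M := by
    rw [hM, star_mul, star_mul, star_star, hD, mul_assoc]
  have hUU : star V * V = 1 := Matrix.UnitaryGroup.star_mul_self U
  have hMM : M * M = V * (Matrix.diagonal d * Matrix.diagonal d) * star V := by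
    rw [hM]
    calc V * Matrix.diagonal d * star V * (V * Matrix.diagonal d * star V)
        = V * Matrix.diagonal d * (star V * V) * Matrix.diagonal d * star V := by
          noncomm_ring
      _ = V * (Matrix.diagonal d * Matrix.diagonal d) * star V := by
          rw [hUU]; noncomm_ring
  have htr : Matrix.trace (M * M) = ∑ i, d i ^ 2 := by
    rw [hMM, Matrix.trace_mul_cycle, hUU]
    simp [Matrix.diagonal_mul_diagonal, Matrix.trace_diagonal, sq]
  rw [← htr]
  rw [Matrix.trace]
  simp only [Matrix.diag_apply, Matrix.mul_apply]
  rw [Finset.sum_comm]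
  apply Finset.sum_congr rfl
  intro i _
  apply Finset.sum_congr rfl
  intro j _
  have : M j i = M i j := by
    conv_lhs => rw [← hsym]
    simp [Matrix.star_eq_conjTranspose, Matrix.conjTranspose_apply]
  rw [this, sq]

/-- `‖Φ(ε,W) − Π(W)‖_F ≤ (√n/2)·|ε|`: the smoothed projection approximates the metric
projection onto the PSD cone uniformly in `W` as `ε → 0`. -/
theorem Phi_approx_proj {n : ℕ} (hn : 0 < n) (ε : ℝ)
    (W : Matrix (Fin n) (Fin n) ℝ) (hW : W.IsHermitian) :
    frobNorm (Phi ε hW - PiPSD hW) ≤ (Real.sqrt n / 2) * |ε| := by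
  set g : Fin n → ℝ := fun i => huber ε (hW.eigenvalues i) - max (hW.eigenvalues i) 0 with hg
  have hdiff : Phi ε hW - PiPSD hW =
      (hW.eigenvectorUnitary : Matrix (Fin n) (Fin n) ℝ) * Matrix.diagonal g *
        star (hW.eigenvectorUnitary : Matrix (Fin n) (Fin n) ℝ) := by
    rw [Phi, PiPSD, Matrix.IsHermitian.cfc, Matrix.IsHermitian.cfc]
    rw [Unitary.conjStarAlgAut_apply, Unitary.conjStarAlgAut_apply]
    rw [← Matrix.sub_mul, ← Matrix.mul_sub, ← Matrix.diagonal_sub]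
    congr 2
  rw [frobNorm, hdiff, key]
  have hbound : ∑ i, g i ^ 2 ≤ (n : ℝ) * (|ε| / 2) ^ 2 := by
    calc ∑ i, g i ^ 2 ≤ ∑ _i : Fin n, (|ε| / 2) ^ 2 := by
          apply Finset.sum_le_sum
          intro i _
          rw [← sq_abs (g i)]
          apply pow_le_pow_left₀ (abs_nonneg _) (huber_sub_max_abs ε _)
      _ = (n : ℝ) * (|ε| / 2) ^ 2 := by simp [mul_comm]
  calc Real.sqrt (∑ i, g i ^ 2) ≤ Real.sqrt ((n : ℝ) * (|ε| / 2) ^ 2) :=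
        Real.sqrt_le_sqrt hbound
    _ = Real.sqrt n * (|ε| / 2) := by
        rw [Real.sqrt_mul (Nat.cast_nonneg n), Real.sqrt_sq (by positivity)]
    _ = Real.sqrt n / 2 * |ε| := by ring
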